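/- Let G be a connected, locally finite, quasi-transitive graph. Then the function p ↦ sup_{n≥1} (κ_p(n))^{1/n} is left continuous on (0,1]: for every p ∈ (0,1], lim_{ε→0+} sup_{n≥1} (κ_{p-ε}(n))^{1/n} = sup_{n≥1} (κ_p(n))^{1/n}. -/

import Mathlib

open MeasureTheory Filter Topology

noncomputable section

namespace BernoulliPercolation

variable {V : Type*}

/-- The spanning subgraph of the retained (open) edges of a configuration `ω`:
edge `e` of `G` is retained iff `ω e = true`. -/
def openSubgraph (G : SimpleGraph V) (ω : G.edgeSet → Bool) : SimpleGraph V :=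
  SimpleGraph.fromEdgeSet {e : Sym2 V | ∃ he : e ∈ G.edgeSet, ω ⟨e, he⟩ = true}

/-- The event that `x` and `y` are connected in the percolation configuration. -/
def connEvent (G : SimpleGraph V) (x y : V) : Set (G.edgeSet → Bool) :=
  {ω | (openSubgraph G ω).Reachable x y}

/-- The event that `x` and `y` are joined by an open path of length at most `r`. -/
def connEventLe (G : SimpleGraph V) (x y : V) (r : ℕ) : Set (G.edgeSet → Bool) :=
  {ω | ∃ w : (openSubgraph G ω).Walk x y, w.IsPath ∧ w.length ≤ r}

/-- `μ` is Bernoulli bond percolation on `G` with retention parameter `p`: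
the states of the edges are independent, and each edge is retained (open) with
probability `p` and deleted with probability `1 - p`. -/
def IsBernoulli (G : SimpleGraph V) (p : ℝ) (μ : Measure (G.edgeSet → Bool)) : Prop :=
  ∀ (S : Finset G.edgeSet) (f : G.edgeSet → Bool),
    μ {ω | ∀ e ∈ S, ω e = f e} =
      ∏ e ∈ S, (if f e then ENNReal.ofReal p else ENNReal.ofReal (1 - p))

/-- The two-point (connection) probability `τ(x,y)`. -/
def tau (G : SimpleGraph V) (μ : Measure (G.edgeSet → Bool)) (x y : V) : ℝ :=
  (μ (connEvent G x y)).toReal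

/-- `τ^r(x,y)`: the probability that `x` and `y` are joined by an open path of
length at most `r`. -/
def tauLe (G : SimpleGraph V) (μ : Measure (G.edgeSet → Bool)) (x y : V) (r : ℕ) : ℝ :=
  (μ (connEventLe G x y r)).toReal

/-- `κ(n) = inf {τ(x,y) : d(x,y) ≤ n}`. -/
def kappa (G : SimpleGraph V) (μ : Measure (G.edgeSet → Bool)) (n : ℕ) : ℝ :=
  sInf {t : ℝ | ∃ x y : V, G.dist x y ≤ n ∧ t = tau G μ x y}

/-- The cluster of the vertex `x` in the configuration `ω`. -/
def cluster (G : SimpleGraph V) (ω : G.edgeSet → Bool) (x : V) : Set V :=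
  {y | (openSubgraph G ω).Reachable x y}

/-- The configuration `ω` has no infinite clusters. -/
def NoInfiniteCluster (G : SimpleGraph V) (ω : G.edgeSet → Bool) : Prop :=
  ∀ x : V, (cluster G ω x).Finite

/-- The configuration `ω` has a unique infinite cluster. -/
def UniqueInfiniteCluster (G : SimpleGraph V) (ω : G.edgeSet → Bool) : Prop :=
  ∃! c : (openSubgraph G ω).ConnectedComponent, c.supp.Infinite

/-- The critical probability `p_c`, for a family `μ p` of percolation measures. -/
def pc (G : SimpleGraph V) (μ : ℝ → Measure (G.edgeSet → Bool)) : ℝ :=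
  sSup {p : ℝ | p ∈ Set.Icc (0:ℝ) 1 ∧ μ p {ω | NoInfiniteCluster G ω} = 1}

/-- `G` is quasi-transitive: the action of `Aut(G)` on `V` has finitely many orbits. -/
def QuasiTransitive (G : SimpleGraph V) : Prop :=
  ∃ S : Finset V, ∀ x : V, ∃ y ∈ S, ∃ γ : G ≃g G, γ y = x

/-- The graph-distance ball of radius `r` about `x`. -/
def ball (G : SimpleGraph V) (x : V) (r : ℕ) : Set V :=
  {y : V | G.dist x y ≤ r}

/-- The exponential growth rate `gr(G) = liminf |B(x,r)|^{1/r}` of `G`, seen from `x`. -/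
def growth (G : SimpleGraph V) (x : V) : ℝ :=
  Filter.liminf (fun r : ℕ => ((ball G x r).ncard : ℝ) ^ ((r : ℝ)⁻¹)) Filter.atTop

/-- `G` has exponential growth: `gr(G) > 1`. -/
def ExponentialGrowth (G : SimpleGraph V) : Prop :=
  ∀ x : V, 1 < growth G x

/-- `sup_{n ≥ 1} κ(n)^{1/n}`. -/
def supKappaRoot (G : SimpleGraph V) (μ : Measure (G.edgeSet → Bool)) : ℝ :=
  sSup {t : ℝ | ∃ n : ℕ, 1 ≤ n ∧ t = kappa G μ n ^ ((n : ℝ)⁻¹)}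


/-! ### Auxiliary machinery -/

attribute [local instance 10] Classical.propDecidable

section Abstract

variable {ι : Type*}

/-- The configuration which is `true` exactly on `T`. -/
def patCfg (T : Finset ι) : ι → Bool := fun e => decide (e ∈ T)

/-- The cylinder event determined by the values of `f` on `S`. -/
def cylEvent (S : Finset ι) (f : ι → Bool) : Set (ι → Bool) := {ω | ∀ e ∈ S, ω e = f e}

lemma measurableSet_cylEvent (S : Finset ι) (f : ι → Bool) :
    MeasurableSet (cylEvent S f) := by
  have h : cylEvent S f = ⋂ e ∈ (S : Set ι), (fun ω : ι → Bool => ω e) ⁻¹' {f e} := by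
    ext ω; simp [cylEvent]
  rw [h]
  exact MeasurableSet.biInter S.countable_toSet
    (fun e _ => (measurable_pi_apply e) (measurableSet_singleton _))

/-- `A` depends only on the coordinates in `S`. -/
def DependsOn (A : Set (ι → Bool)) (S : Finset ι) : Prop :=
  ∀ ω ω' : ι → Bool, (∀ e ∈ S, ω e = ω' e) → ω ∈ A → ω' ∈ A

/-- `A` is an increasing event. -/
def IncrEvent (A : Set (ι → Bool)) : Prop :=
  ∀ ω ω' : ι → Bool, (∀ e, ω e = true → ω' e = true) → ω ∈ A → ω' ∈ A

/-- The weight polynomial of the event `A` w.r.t. the coordinates `S`. -/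
def W (q : ℝ) (S : Finset ι) (A : Set (ι → Bool)) : ℝ :=
  ∑ T ∈ S.powerset, (if patCfg T ∈ A then q ^ T.card * (1 - q) ^ (S.card - T.card) else 0)

lemma eq_biUnion_cyl {A : Set (ι → Bool)} {S : Finset ι} (hdep : DependsOn A S) :
    A = ⋃ T ∈ S.powerset.filter (fun T => patCfg T ∈ A), cylEvent S (patCfg T) := by
  ext ω
  simp only [Set.mem_iUnion, Finset.mem_filter, Finset.mem_powerset]
  constructor
  · intro hω
    refine ⟨S.filter (fun e => ω e = true), ⟨⟨Finset.filter_subset _ _, ?_⟩, ?_⟩⟩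
    · refine hdep ω _ (fun e he => ?_) hω
      simp only [patCfg, Finset.mem_filter]
      cases hcase : ω e <;> simp [hcase, he]
    · intro e he
      simp only [patCfg, Finset.mem_filter]
      cases hcase : ω e <;> simp [hcase, he]
  · rintro ⟨T, ⟨⟨-, hT⟩, hcyl⟩⟩
    exact hdep _ ω (fun e he => (hcyl e he).symm) hT

lemma measure_eq_W {μ : Measure (ι → Bool)} {q : ℝ}
    (hber : ∀ (S : Finset ι) (f : ι → Bool),
      μ {ω | ∀ e ∈ S, ω e = f e} =
        ∏ e ∈ S, (if f e then ENNReal.ofReal q else ENNReal.ofReal (1 - q)))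
    (hq0 : 0 ≤ q) (hq1 : q ≤ 1)
    {A : Set (ι → Bool)} {S : Finset ι} (hdep : DependsOn A S) :
    μ A = ENNReal.ofReal (W q S A) := by
  have h1q : (0:ℝ) ≤ 1 - q := by linarith
  conv_lhs => rw [eq_biUnion_cyl hdep]
  rw [measure_biUnion_finset ?disj (fun T _ => measurableSet_cylEvent S (patCfg T))]
  case disj =>
    intro T hT T' hT' hne
    simp only [Finset.coe_filter, Set.mem_setOf_eq, Finset.mem_powerset] at hT hT'
    refine Set.disjoint_left.2 (fun ω hω hω' => hne ?_)
    apply Finset.ext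
    intro e
    by_cases he : e ∈ S
    · have := (hω e he).symm.trans (hω' e he)
      simp only [patCfg] at this
      constructor <;> intro hmem <;> [skip; skip] <;>
        · simp only [decide_eq_decide] at this
          first | exact this.1 hmem | exact this.2 hmem
    · exact ⟨fun h => absurd (hT.1 h) he, fun h => absurd (hT'.1 h) he⟩
  · have hterm : ∀ T ∈ S.powerset.filter (fun T => patCfg T ∈ A),
        μ (cylEvent S (patCfg T)) =
          ENNReal.ofReal (q ^ T.card * (1 - q) ^ (S.card - T.card)) := by
      intro T hT
      simp only [Finset.mem_filter, Finset.mem_powerset] at hT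
      have := hber S (patCfg T)
      rw [show {ω : ι → Bool | ∀ e ∈ S, ω e = patCfg T e} = cylEvent S (patCfg T) from rfl] at this
      rw [this]
      rw [← Finset.prod_sdiff hT.1]
      have hfst : ∀ e ∈ S \ T, (if patCfg T e then ENNReal.ofReal q else ENNReal.ofReal (1 - q))
          = ENNReal.ofReal (1 - q) := by
        intro e he
        rw [Finset.mem_sdiff] at he
        simp [patCfg, he.2]
      have hsnd : ∀ e ∈ T, (if patCfg T e then ENNReal.ofReal q else ENNReal.ofReal (1 - q))
          = ENNReal.ofReal q := by
        intro e he; simp [patCfg, he]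
      rw [Finset.prod_congr rfl hfst, Finset.prod_congr rfl hsnd]
      rw [Finset.prod_const, Finset.prod_const, Finset.card_sdiff_of_subset hT.1]
      rw [ENNReal.ofReal_mul (by positivity), ENNReal.ofReal_pow hq0, ENNReal.ofReal_pow h1q]
      ring
    rw [Finset.sum_congr rfl hterm]
    rw [← ENNReal.ofReal_sum_of_nonneg (fun T _ => by positivity)]
    congr 1
    rw [W, Finset.sum_filter]

lemma W_nonneg {q : ℝ} (hq0 : 0 ≤ q) (hq1 : q ≤ 1) (S : Finset ι) (A : Set (ι → Bool)) :
    0 ≤ W q S A := by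
  refine Finset.sum_nonneg (fun T _ => ?_)
  have : (0:ℝ) ≤ 1 - q := by linarith
  positivity

lemma W_mono_event {q : ℝ} (hq0 : 0 ≤ q) (hq1 : q ≤ 1) {S : Finset ι}
    {A B : Set (ι → Bool)} (h : A ⊆ B) : W q S A ≤ W q S B := by
  refine Finset.sum_le_sum (fun T _ => ?_)
  have h1q : (0:ℝ) ≤ 1 - q := by linarith
  by_cases hT : patCfg T ∈ A
  · simp only [hT, h hT, if_true]; exact le_rfl
  · simp only [hT, if_false]
    by_cases hT' : patCfg T ∈ B <;> simp [hT'] <;> positivity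

lemma patCfg_insert {e : ι} {T : Finset ι} :
    patCfg (insert e T) = Function.update (patCfg T) e true := by
  funext a
  by_cases ha : a = e
  · subst ha; simp [patCfg, Function.update_self]
  · simp [patCfg, Function.update_of_ne ha, ha]

lemma W_insert {q : ℝ} {e : ι} {S : Finset ι} (he : e ∉ S) (A : Set (ι → Bool)) :
    W q (insert e S) A =
      (1 - q) * W q S A + q * W q S ((fun ω => Function.update ω e true) ⁻¹' A) := by
  rw [W, Finset.sum_powerset_insert he]
  congr 1
  · rw [W, Finset.mul_sum]
    refine Finset.sum_congr rfl (fun T hT => ?_)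
    rw [Finset.mem_powerset] at hT
    have hcard : T.card ≤ S.card := Finset.card_le_card hT
    have : (insert e S).card - T.card = (S.card - T.card) + 1 := by
      rw [Finset.card_insert_of_notMem he]; omega
    rw [this]
    by_cases hA : patCfg T ∈ A <;> simp [hA] <;> ring
  · rw [W, Finset.mul_sum]
    refine Finset.sum_congr rfl (fun T hT => ?_)
    rw [Finset.mem_powerset] at hT
    have heT : e ∉ T := fun h => he (hT h)
    have hcard : (insert e T).card = T.card + 1 := Finset.card_insert_of_notMem heT
    have hcard2 : (insert e S).card - (insert e T).card = S.card - T.card := by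
      rw [Finset.card_insert_of_notMem he, hcard]; omega
    rw [hcard2, hcard, patCfg_insert]
    by_cases hA : Function.update (patCfg T) e true ∈ A <;>
      simp [hA, Set.mem_preimage] <;> ring

lemma IncrEvent.preimage_update {A : Set (ι → Bool)} (hA : IncrEvent A) (e : ι) :
    IncrEvent ((fun ω => Function.update ω e true) ⁻¹' A) := by
  intro ω ω' hle h
  refine hA _ _ (fun a ha => ?_) h
  by_cases hae : a = e
  · subst hae; simp [Function.update_self]
  · simp only [Function.update_of_ne hae] at ha ⊢; exact hle a ha

lemma IncrEvent.subset_preimage_update {A : Set (ι → Bool)} (hA : IncrEvent A) (e : ι) :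
    A ⊆ (fun ω => Function.update ω e true) ⁻¹' A := by
  intro ω h
  refine hA ω _ (fun a ha => ?_) h
  by_cases hae : a = e
  · subst hae; simp [Function.update_self]
  · simpa [Function.update_of_ne hae] using ha

lemma W_mono_param {q p : ℝ} (hq0 : 0 ≤ q) (hqp : q ≤ p) (hp1 : p ≤ 1)
    (S : Finset ι) {A : Set (ι → Bool)} (hA : IncrEvent A) : W q S A ≤ W p S A := by
  induction S using Finset.induction_on generalizing A with
  | empty => simp [W]
  | @insert e S he ih =>
    rw [W_insert he, W_insert he]
    set A1 := (fun ω => Function.update ω e true) ⁻¹' A with hA1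
    have hq1 : q ≤ 1 := le_trans hqp hp1
    have hp0 : 0 ≤ p := le_trans hq0 hqp
    have h1 : W q S A ≤ W q S A1 := W_mono_event hq0 hq1 (hA.subset_preimage_update e)
    have h2 : W q S A ≤ W p S A := ih hA
    have h3 : W q S A1 ≤ W p S A1 := ih (hA.preimage_update e)
    nlinarith [W_nonneg hq0 hq1 S A, W_nonneg hq0 hq1 S A1]

lemma W_ratio {q p : ℝ} (hq0 : 0 ≤ q) (hqp : q ≤ p) (hp0 : 0 < p) (hp1 : p ≤ 1)
    (S : Finset ι) (A : Set (ι → Bool)) :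
    (q / p) ^ S.card * W p S A ≤ W q S A := by
  rw [W, W, Finset.mul_sum]
  refine Finset.sum_le_sum (fun T hT => ?_)
  rw [Finset.mem_powerset] at hT
  have hk : T.card ≤ S.card := Finset.card_le_card hT
  by_cases hAT : patCfg T ∈ A
  · simp only [hAT, if_true]
    have h1q : (0:ℝ) ≤ 1 - q := by linarith
    have h1p : (0:ℝ) ≤ 1 - p := by linarith
    have hqp0 : 0 ≤ q / p := div_nonneg hq0 hp0.le
    have hsplit : (q / p) ^ S.card = (q / p) ^ T.card * (q / p) ^ (S.card - T.card) := by
      rw [← pow_add]; congr 1; omega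
    rw [hsplit]
    have e1 : (q / p) ^ T.card * p ^ T.card = q ^ T.card := by
      rw [← mul_pow, div_mul_cancel₀ _ hp0.ne']
    have e2 : (q / p) ^ (S.card - T.card) * (1 - p) ^ (S.card - T.card)
        ≤ (1 - q) ^ (S.card - T.card) := by
      rw [← mul_pow]
      refine pow_le_pow_left₀ (by positivity) ?_ _
      rw [div_mul_eq_mul_div, div_le_iff₀ hp0]
      nlinarith
    calc (q / p) ^ T.card * (q / p) ^ (S.card - T.card) * (p ^ T.card * (1 - p) ^ (S.card - T.card))
        = ((q / p) ^ T.card * p ^ T.card) *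
            ((q / p) ^ (S.card - T.card) * (1 - p) ^ (S.card - T.card)) := by ring
      _ ≤ q ^ T.card * (1 - q) ^ (S.card - T.card) := by
          rw [e1]
          exact mul_le_mul_of_nonneg_left e2 (by positivity)
  · simp [hAT]

lemma W_eq_of_equiv [DecidableEq ι] {q : ℝ} {σ : ι ≃ ι} {S S' : Finset ι} {A A' : Set (ι → Bool)}
    (hS : S' = S.image σ)
    (hA : ∀ T ∈ S.powerset, (patCfg (T.image σ) ∈ A' ↔ patCfg T ∈ A)) :
    W q S' A' = W q S A := by
  subst hS
  rw [W, W]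
  rw [Finset.card_image_of_injective _ σ.injective]
  refine Finset.sum_nbij' (fun T => T.image σ.symm) (fun T => T.image σ) ?_ ?_ ?_ ?_ ?_
  · intro U hU
    rw [Finset.mem_powerset] at hU ⊢
    intro a ha
    rw [Finset.mem_image] at ha
    obtain ⟨b, hb, rfl⟩ := ha
    obtain ⟨c, hc, rfl⟩ := Finset.mem_image.1 (hU hb)
    simpa using hc
  · intro T hT
    rw [Finset.mem_powerset] at hT ⊢
    exact Finset.image_subset_image hT
  · intro U hU
    simp only [Finset.image_image]
    simp [Finset.image_id']
  · intro T hT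
    simp only [Finset.image_image]
    simp [Finset.image_id']
  · intro U hU
    rw [Finset.mem_powerset] at hU
    have hTsub : U.image σ.symm ∈ S.powerset := by
      rw [Finset.mem_powerset]
      intro a ha
      obtain ⟨b, hb, rfl⟩ := Finset.mem_image.1 ha
      obtain ⟨c, hc, rfl⟩ := Finset.mem_image.1 (hU hb)
      simpa using hc
    have himg : (U.image σ.symm).image σ = U := by
      rw [Finset.image_image]; simp [Finset.image_id']
    rw [Finset.card_image_of_injective _ σ.symm.injective]
    have := hA (U.image σ.symm) hTsub
    rw [himg] at this
    rw [this]

lemma patCfg_image_equiv [DecidableEq ι] (σ : ι ≃ ι) (T : Finset ι) :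
    patCfg (T.image σ) = fun e => patCfg T (σ.symm e) := by
  funext e
  simp only [patCfg]
  apply decide_eq_decide.2
  constructor
  · rintro hmem
    obtain ⟨b, hb, rfl⟩ := Finset.mem_image.1 hmem
    simpa using hb
  · intro h
    exact Finset.mem_image.2 ⟨σ.symm e, h, by simp⟩

end Abstract

section Graph

variable {G : SimpleGraph V}

lemma openSubgraph_le (ω : G.edgeSet → Bool) : openSubgraph G ω ≤ G := by
  have h : openSubgraph G ω ≤ SimpleGraph.fromEdgeSet G.edgeSet :=
    SimpleGraph.fromEdgeSet_mono (fun e he => he.1)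
  rwa [SimpleGraph.fromEdgeSet_edgeSet] at h

lemma openSubgraph_adj {ω : G.edgeSet → Bool} {u v : V} :
    (openSubgraph G ω).Adj u v ↔ ∃ he : s(u, v) ∈ G.edgeSet, ω ⟨s(u, v), he⟩ = true := by
  rw [openSubgraph, SimpleGraph.fromEdgeSet_adj]
  constructor
  · rintro ⟨⟨he, hω⟩, -⟩; exact ⟨he, hω⟩
  · rintro ⟨he, hω⟩
    exact ⟨⟨he, hω⟩, (G.ne_of_adj (G.mem_edgeSet.1 he))⟩

/-- Vertices reachable from `x` by a walk of length at most `r` form a finite set. -/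
lemma reachSet_finite (hlf : ∀ v : V, (G.neighborSet v).Finite) (r : ℕ) :
    ∀ x : V, {y : V | ∃ w : G.Walk x y, w.length ≤ r}.Finite := by
  induction r with
  | zero =>
    intro x
    refine Set.Finite.subset (Set.finite_singleton x) ?_
    rintro y ⟨w, hw⟩
    rw [Set.mem_singleton_iff]
    exact (SimpleGraph.Walk.eq_of_length_eq_zero (Nat.le_zero.1 hw)).symm
  | succ r ih =>
    intro x
    have hsub : {y : V | ∃ w : G.Walk x y, w.length ≤ r + 1} ⊆
        ⋃ z ∈ insert x (G.neighborSet x), {y : V | ∃ w : G.Walk z y, w.length ≤ r} := by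
      rintro y ⟨w, hw⟩
      cases w with
      | nil => exact Set.mem_biUnion (Set.mem_insert _ _) ⟨SimpleGraph.Walk.nil, Nat.zero_le r⟩
      | cons h w' =>
        rw [SimpleGraph.Walk.length_cons] at hw
        exact Set.mem_biUnion (Set.mem_insert_of_mem _ h) ⟨w', by omega⟩
    exact Set.Finite.subset (Set.Finite.biUnion ((hlf x).insert x) (fun z _ => ih z)) hsub

lemma ball_finite (hconn : G.Connected) (hlf : ∀ v : V, (G.neighborSet v).Finite)
    (x : V) (r : ℕ) : {y : V | G.dist x y ≤ r}.Finite := by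
  refine Set.Finite.subset (reachSet_finite hlf r x) ?_
  intro y hy
  obtain ⟨w, hw⟩ := (hconn x y).exists_walk_length_eq_dist
  exact ⟨w, hw.le.trans hy⟩

/-- The set of edges of `G` whose endpoints are within distance `r` of `x`. -/
def edgeBall (G : SimpleGraph V) (x : V) (r : ℕ) : Set G.edgeSet :=
  {e | ∀ v ∈ (e : Sym2 V), G.dist x v ≤ r}

lemma edgeBall_finite (hconn : G.Connected) (hlf : ∀ v : V, (G.neighborSet v).Finite)
    (x : V) (r : ℕ) : (edgeBall G x r).Finite := by
  have hB := ball_finite hconn hlf x r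
  have hD : {z : Sym2 V | ∀ v ∈ z, G.dist x v ≤ r}.Finite := by
    refine Set.Finite.subset ((hB.prod hB).image (fun p => s(p.1, p.2))) ?_
    intro z hz
    induction z with
    | _ a b =>
      exact ⟨(a, b), ⟨hz a (Sym2.mem_mk_left a b), hz b (Sym2.mem_mk_right a b)⟩, rfl⟩
  have h : edgeBall G x r = Subtype.val ⁻¹' {z : Sym2 V | ∀ v ∈ z, G.dist x v ≤ r} := rfl
  rw [h]
  exact Set.Finite.preimage (Set.injOn_of_injective Subtype.val_injective) hD

/-- The edge ball as a `Finset`. -/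
def edgeBallFinset (hconn : G.Connected) (hlf : ∀ v : V, (G.neighborSet v).Finite)
    (x : V) (r : ℕ) : Finset G.edgeSet :=
  (edgeBall_finite hconn hlf x r).toFinset

lemma mem_edgeBallFinset {hconn : G.Connected} {hlf : ∀ v : V, (G.neighborSet v).Finite}
    {x : V} {r : ℕ} {e : G.edgeSet} :
    e ∈ edgeBallFinset hconn hlf x r ↔ ∀ v ∈ (e : Sym2 V), G.dist x v ≤ r := by
  rw [edgeBallFinset, Set.Finite.mem_toFinset]; rfl

lemma walk_transfer {ω ω' : G.edgeSet → Bool} {x : V} {r : ℕ}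
    (hagree : ∀ e : G.edgeSet, (∀ v ∈ (e : Sym2 V), G.dist x v ≤ r) → ω e = ω' e) :
    ∀ {u v : V} (w : (openSubgraph G ω).Walk u v),
      (∀ z ∈ w.support, G.dist x z ≤ r) →
      ∃ w' : (openSubgraph G ω').Walk u v, w'.length = w.length ∧ w'.support = w.support := by
  intro u v w
  induction w with
  | nil => exact fun _ => ⟨SimpleGraph.Walk.nil, rfl, rfl⟩
  | @cons a b c h w ih =>
    intro hsupp
    have ha : G.dist x a ≤ r := hsupp a (SimpleGraph.Walk.start_mem_support _)
    have hb : G.dist x b ≤ r := by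
      refine hsupp b ?_
      rw [SimpleGraph.Walk.support_cons]
      exact List.mem_cons_of_mem _ (SimpleGraph.Walk.start_mem_support w)
    obtain ⟨he, hωe⟩ := openSubgraph_adj.1 h
    have hmem : ∀ v ∈ ((⟨s(a, b), he⟩ : G.edgeSet) : Sym2 V), G.dist x v ≤ r := by
      intro v hv
      rcases Sym2.mem_iff.1 hv with rfl | rfl
      · exact ha
      · exact hb
    have h' : (openSubgraph G ω').Adj a b :=
      openSubgraph_adj.2 ⟨he, (hagree ⟨s(a, b), he⟩ hmem) ▸ hωe⟩
    obtain ⟨w', hlen, hsup⟩ := ih (fun z hz => hsupp z (by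
      rw [SimpleGraph.Walk.support_cons]; exact List.mem_cons_of_mem _ hz))
    refine ⟨SimpleGraph.Walk.cons h' w', ?_, ?_⟩
    · rw [SimpleGraph.Walk.length_cons, SimpleGraph.Walk.length_cons, hlen]
    · rw [SimpleGraph.Walk.support_cons, SimpleGraph.Walk.support_cons, hsup]

lemma support_dist_le {ω : G.edgeSet → Bool} {x y : V} {r : ℕ}
    (w : (openSubgraph G ω).Walk x y) (hw : w.length ≤ r) :
    ∀ z ∈ w.support, G.dist x z ≤ r := by
  intro z hz
  obtain ⟨w1, w2, rfl⟩ := SimpleGraph.Walk.mem_support_iff_exists_append.1 hz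
  calc G.dist x z ≤ (w1.mapLe (openSubgraph_le ω)).length := SimpleGraph.dist_le _
    _ = w1.length := SimpleGraph.Walk.length_map _ _
    _ ≤ r := by
        have := SimpleGraph.Walk.length_append w1 w2
        omega

lemma connEventLe_dependsOn (hconn : G.Connected) (hlf : ∀ v : V, (G.neighborSet v).Finite)
    (x y : V) (r : ℕ) :
    DependsOn (connEventLe G x y r) (edgeBallFinset hconn hlf x r) := by
  rintro ω ω' hagree ⟨w, hpath, hlen⟩
  have hag : ∀ e : G.edgeSet, (∀ v ∈ (e : Sym2 V), G.dist x v ≤ r) → ω e = ω' e :=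
    fun e he => hagree e (mem_edgeBallFinset.2 he)
  obtain ⟨w', hlen', hsupp'⟩ := walk_transfer hag w (support_dist_le w hlen)
  refine ⟨w', ?_, by omega⟩
  rw [SimpleGraph.Walk.isPath_def, hsupp']
  exact SimpleGraph.Walk.isPath_def _ |>.1 hpath

lemma connEventLe_incr (x y : V) (r : ℕ) : IncrEvent (connEventLe G x y r) := by
  rintro ω ω' hle ⟨w, hpath, hlen⟩
  have hsub : openSubgraph G ω ≤ openSubgraph G ω' := by
    intro u v huv
    obtain ⟨he, hωe⟩ := openSubgraph_adj.1 huv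
    exact openSubgraph_adj.2 ⟨he, hle _ hωe⟩
  refine ⟨w.mapLe hsub, hpath.mapLe hsub, ?_⟩
  rw [SimpleGraph.Walk.mapLe, SimpleGraph.Walk.length_map]
  exact hlen

lemma connEventLe_mono (x y : V) : Monotone (fun r => connEventLe G x y r) := by
  intro r r' hrr ω hω
  obtain ⟨w, hpath, hlen⟩ := hω
  exact ⟨w, hpath, hlen.trans hrr⟩

lemma connEvent_eq_iUnion (x y : V) : connEvent G x y = ⋃ r : ℕ, connEventLe G x y r := by
  ext ω
  constructor
  · intro hω
    obtain ⟨w⟩ := hω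
    refine Set.mem_iUnion.2 ⟨(w.toPath : (openSubgraph G ω).Walk x y).length,
      ⟨w.toPath, w.toPath.2, le_rfl⟩⟩
  · intro hω
    obtain ⟨r, w, -, -⟩ := Set.mem_iUnion.1 hω
    exact ⟨w⟩

lemma dist_iso_le (γ : G ≃g G) (u v : V) : G.dist (γ u) (γ v) ≤ G.dist u v := by
  by_cases h : G.Reachable u v
  · obtain ⟨w, hw⟩ := h.exists_walk_length_eq_dist
    calc G.dist (γ u) (γ v) ≤ (w.map γ.toHom).length := SimpleGraph.dist_le _
      _ = w.length := SimpleGraph.Walk.length_map _ _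
      _ = G.dist u v := hw
  · have h' : ¬ G.Reachable (γ u) (γ v) := by
      rintro ⟨w⟩
      exact h ⟨(w.map γ.symm.toHom).copy (γ.symm_apply_apply u) (γ.symm_apply_apply v)⟩
    rw [SimpleGraph.dist_eq_zero_of_not_reachable h,
      SimpleGraph.dist_eq_zero_of_not_reachable h']

lemma dist_iso (γ : G ≃g G) (u v : V) : G.dist (γ u) (γ v) = G.dist u v := by
  refine le_antisymm (dist_iso_le γ u v) ?_
  have := dist_iso_le γ.symm (γ u) (γ v)
  simpa using this

/-- Transport of a walk in an open subgraph along a graph automorphism. -/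
lemma walk_map_iso (γ : G ≃g G) (ω : G.edgeSet → Bool) :
    ∀ {u v : V} (w : (openSubgraph G ω).Walk u v),
      ∃ w' : (openSubgraph G (fun e => ω ((γ.mapEdgeSet).symm e))).Walk (γ u) (γ v),
        w'.length = w.length ∧ w'.support = w.support.map γ := by
  intro u v w
  induction w with
  | nil => exact ⟨SimpleGraph.Walk.nil, rfl, rfl⟩
  | @cons a b c h w ih =>
    obtain ⟨he, hωe⟩ := openSubgraph_adj.1 h
    have he' : s(γ a, γ b) ∈ G.edgeSet := by
      rw [SimpleGraph.mem_edgeSet] at he ⊢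
      exact γ.map_adj_iff.2 he
    have hsymm : (γ.mapEdgeSet).symm ⟨s(γ a, γ b), he'⟩ = ⟨s(a, b), he⟩ := by
      rw [Equiv.symm_apply_eq]
      apply Subtype.ext
      simp [SimpleGraph.Iso.mapEdgeSet, SimpleGraph.Hom.mapEdgeSet, Sym2.map_pair_eq]
    have h' : (openSubgraph G (fun e => ω ((γ.mapEdgeSet).symm e))).Adj (γ a) (γ b) := by
      refine openSubgraph_adj.2 ⟨he', ?_⟩
      show ω ((γ.mapEdgeSet).symm ⟨s(γ a, γ b), he'⟩) = true
      rw [hsymm]; exact hωe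
    obtain ⟨w', hlen, hsupp⟩ := ih
    refine ⟨SimpleGraph.Walk.cons h' w', ?_, ?_⟩
    · simp [SimpleGraph.Walk.length_cons, hlen]
    · simp [SimpleGraph.Walk.support_cons, hsupp]

lemma connEventLe_iso (γ : G ≃g G) (ω : G.edgeSet → Bool) (x y : V) (r : ℕ)
    (hω : ω ∈ connEventLe G x y r) :
    (fun e => ω ((γ.mapEdgeSet).symm e)) ∈ connEventLe G (γ x) (γ y) r := by
  obtain ⟨w, hpath, hlen⟩ := hω
  obtain ⟨w', hlen', hsupp'⟩ := walk_map_iso γ ω w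
  refine ⟨w', ?_, by omega⟩
  rw [SimpleGraph.Walk.isPath_def, hsupp']
  exact (SimpleGraph.Walk.isPath_def w |>.1 hpath).map γ.injective

lemma mapEdgeSet_symm_symm (γ : G ≃g G) (e : G.edgeSet) :
    (γ.symm.mapEdgeSet).symm e = γ.mapEdgeSet e := by
  rw [Equiv.symm_apply_eq]
  apply Subtype.ext
  show (e : Sym2 V) = Sym2.map γ.symm (Sym2.map γ (e : Sym2 V))
  rw [Sym2.map_map]
  have h : (⇑γ.symm ∘ ⇑γ) = id := by
    funext a; simp
  rw [h]
  simp

lemma connEventLe_iso_iff (γ : G ≃g G) (ω : G.edgeSet → Bool) (x y : V) (r : ℕ) :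
    (fun e => ω ((γ.mapEdgeSet).symm e)) ∈ connEventLe G (γ x) (γ y) r ↔
      ω ∈ connEventLe G x y r := by
  refine ⟨fun h => ?_, connEventLe_iso γ ω x y r⟩
  have h2 := connEventLe_iso γ.symm _ (γ x) (γ y) r h
  have hfun : (fun e => (fun e => ω ((γ.mapEdgeSet).symm e)) ((γ.symm.mapEdgeSet).symm e)) = ω := by
    funext e
    simp only [mapEdgeSet_symm_symm, Equiv.symm_apply_apply]
  rw [hfun] at h2
  simpa using h2

lemma edgeBallFinset_iso (hconn : G.Connected) (hlf : ∀ v : V, (G.neighborSet v).Finite)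
    (γ : G ≃g G) (x : V) (r : ℕ) :
    edgeBallFinset hconn hlf (γ x) r = (edgeBallFinset hconn hlf x r).image γ.mapEdgeSet := by
  ext e
  rw [mem_edgeBallFinset, Finset.mem_image]
  constructor
  · intro h
    refine ⟨γ.mapEdgeSet.symm e, mem_edgeBallFinset.2 ?_, γ.mapEdgeSet.apply_symm_apply e⟩
    intro v hv
    have hval : ((γ.mapEdgeSet.symm e : G.edgeSet) : Sym2 V) = Sym2.map γ.symm (e : Sym2 V) := rfl
    rw [hval] at hv
    obtain ⟨u, hu, rfl⟩ := Sym2.mem_map.1 hv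
    have h1 := h u hu
    have hd : G.dist x (γ.symm u) = G.dist (γ x) u := by
      have h2 := dist_iso γ x (γ.symm u)
      simpa using h2.symm
    rw [hd]; exact h1
  · rintro ⟨d, hd, rfl⟩
    intro v hv
    have hval : ((γ.mapEdgeSet d : G.edgeSet) : Sym2 V) = Sym2.map γ (d : Sym2 V) := rfl
    rw [hval] at hv
    obtain ⟨u, hu, rfl⟩ := Sym2.mem_map.1 hv
    exact (dist_iso γ x u).trans_le (mem_edgeBallFinset.1 hd u hu)

end Graph

section Tau

variable {G : SimpleGraph V}

lemma isProb {q : ℝ} {μ : Measure (G.edgeSet → Bool)} (hber : IsBernoulli G q μ) :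
    IsProbabilityMeasure μ := by
  constructor
  have h := hber ∅ (fun _ => false)
  simpa using h

lemma measure_connEventLe_eq (hconn : G.Connected) (hlf : ∀ v : V, (G.neighborSet v).Finite) {q : ℝ} {μ : Measure (G.edgeSet → Bool)}
    (hber : IsBernoulli G q μ) (hq0 : 0 ≤ q) (hq1 : q ≤ 1) (x y : V) (r : ℕ) :
    μ (connEventLe G x y r)
      = ENNReal.ofReal (W q (edgeBallFinset hconn hlf x r) (connEventLe G x y r)) :=
  measure_eq_W hber hq0 hq1 (connEventLe_dependsOn hconn hlf x y r)

lemma tauLe_eq_W (hconn : G.Connected) (hlf : ∀ v : V, (G.neighborSet v).Finite) {q : ℝ} {μ : Measure (G.edgeSet → Bool)}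
    (hber : IsBernoulli G q μ) (hq0 : 0 ≤ q) (hq1 : q ≤ 1) (x y : V) (r : ℕ) :
    tauLe G μ x y r = W q (edgeBallFinset hconn hlf x r) (connEventLe G x y r) := by
  rw [tauLe, measure_connEventLe_eq hconn hlf hber hq0 hq1,
    ENNReal.toReal_ofReal (W_nonneg hq0 hq1 _ _)]

lemma measure_connEvent_eq_iSup (μ : Measure (G.edgeSet → Bool)) (x y : V) :
    μ (connEvent G x y) = ⨆ r : ℕ, μ (connEventLe G x y r) := by
  rw [connEvent_eq_iUnion]
  exact Directed.measure_iUnion ((connEventLe_mono x y).directed_le)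

lemma tauLe_le_tau {μ : Measure (G.edgeSet → Bool)} [IsFiniteMeasure μ] (x y : V) (r : ℕ) :
    tauLe G μ x y r ≤ tau G μ x y := by
  refine ENNReal.toReal_mono (measure_ne_top μ _) (measure_mono ?_)
  rw [connEvent_eq_iUnion]
  exact Set.subset_iUnion (fun r => connEventLe G x y r) r

lemma tauLe_mono_r {μ : Measure (G.edgeSet → Bool)} [IsFiniteMeasure μ] (x y : V)
    {r r' : ℕ} (h : r ≤ r') : tauLe G μ x y r ≤ tauLe G μ x y r' :=
  ENNReal.toReal_mono (measure_ne_top μ _) (measure_mono (connEventLe_mono x y h))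

lemma exists_tauLe_gt {μ : Measure (G.edgeSet → Bool)} [IsFiniteMeasure μ] {x y : V} {c : ℝ}
    (hc : c < tau G μ x y) : ∃ r, c < tauLe G μ x y r := by
  rcases lt_or_ge c 0 with h0 | h0
  · exact ⟨0, lt_of_lt_of_le h0 ENNReal.toReal_nonneg⟩
  · have h1 : ENNReal.ofReal c < μ (connEvent G x y) :=
      (ENNReal.ofReal_lt_iff_lt_toReal h0 (measure_ne_top μ _)).2 hc
    rw [measure_connEvent_eq_iSup] at h1
    obtain ⟨r, hr⟩ := lt_iSup_iff.1 h1
    exact ⟨r, (ENNReal.ofReal_lt_iff_lt_toReal h0 (measure_ne_top μ _)).1 hr⟩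

lemma tau_mono_param (hconn : G.Connected) (hlf : ∀ v : V, (G.neighborSet v).Finite) {q p : ℝ} {μq μp : Measure (G.edgeSet → Bool)}
    (hbq : IsBernoulli G q μq) (hbp : IsBernoulli G p μp)
    (hq0 : 0 ≤ q) (hqp : q ≤ p) (hp1 : p ≤ 1) (x y : V) :
    tau G μq x y ≤ tau G μp x y := by
  haveI := isProb hbq; haveI := isProb hbp
  refine le_of_forall_lt (fun c hc => ?_)
  obtain ⟨r, hr⟩ := exists_tauLe_gt hc
  have h1 : tauLe G μq x y r ≤ tauLe G μp x y r := by
    rw [tauLe_eq_W hconn hlf hbq hq0 (hqp.trans hp1) x y r,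
      tauLe_eq_W hconn hlf hbp (hq0.trans hqp) hp1 x y r]
    exact W_mono_param hq0 hqp hp1 _ (connEventLe_incr x y r)
  exact lt_of_lt_of_le hr (h1.trans (tauLe_le_tau x y r))

lemma tau_ratio (hconn : G.Connected) (hlf : ∀ v : V, (G.neighborSet v).Finite) {q p : ℝ} {μq μp : Measure (G.edgeSet → Bool)}
    (hbq : IsBernoulli G q μq) (hbp : IsBernoulli G p μp)
    (hq0 : 0 ≤ q) (hqp : q ≤ p) (hp0 : 0 < p) (hp1 : p ≤ 1) (x y : V) (r : ℕ) :
    (q / p) ^ ((edgeBallFinset hconn hlf x r).card) * tauLe G μp x y r ≤ tau G μq x y := by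
  haveI := isProb hbq
  refine le_trans ?_ (tauLe_le_tau x y r)
  rw [tauLe_eq_W hconn hlf hbq hq0 (hqp.trans hp1) x y r,
    tauLe_eq_W hconn hlf hbp hp0.le hp1 x y r]
  exact W_ratio hq0 hqp hp0 hp1 _ _

lemma measure_connEventLe_iso (hconn : G.Connected) (hlf : ∀ v : V, (G.neighborSet v).Finite) {q : ℝ} {μ : Measure (G.edgeSet → Bool)}
    (hber : IsBernoulli G q μ) (hq0 : 0 ≤ q) (hq1 : q ≤ 1) (γ : G ≃g G) (x y : V) (r : ℕ) :
    μ (connEventLe G (γ x) (γ y) r) = μ (connEventLe G x y r) := by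
  rw [measure_connEventLe_eq hconn hlf hber hq0 hq1, measure_connEventLe_eq hconn hlf hber hq0 hq1]
  congr 1
  refine W_eq_of_equiv (σ := γ.mapEdgeSet) (edgeBallFinset_iso hconn hlf γ x r) ?_
  intro T _
  rw [patCfg_image_equiv]
  exact connEventLe_iso_iff γ (patCfg T) x y r

lemma tau_iso (hconn : G.Connected) (hlf : ∀ v : V, (G.neighborSet v).Finite) {q : ℝ} {μ : Measure (G.edgeSet → Bool)}
    (hber : IsBernoulli G q μ) (hq0 : 0 ≤ q) (hq1 : q ≤ 1) (γ : G ≃g G) (x y : V) :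
    tau G μ (γ x) (γ y) = tau G μ x y := by
  rw [tau, tau, measure_connEvent_eq_iSup, measure_connEvent_eq_iSup]
  congr 1
  exact iSup_congr (fun r => measure_connEventLe_iso hconn hlf hber hq0 hq1 γ x y r)

lemma tau_nonneg {μ : Measure (G.edgeSet → Bool)} (x y : V) : 0 ≤ tau G μ x y :=
  ENNReal.toReal_nonneg

lemma tau_le_one {μ : Measure (G.edgeSet → Bool)} [IsProbabilityMeasure μ] (x y : V) :
    tau G μ x y ≤ 1 := by
  have h := ENNReal.toReal_mono ENNReal.one_ne_top (prob_le_one (μ := μ) (s := connEvent G x y))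
  simpa [tau] using h

end Tau

section Kappa

variable {G : SimpleGraph V}

lemma kappaSet_nonempty (hconn : G.Connected) (μ : Measure (G.edgeSet → Bool)) (n : ℕ) :
    {t : ℝ | ∃ x y : V, G.dist x y ≤ n ∧ t = tau G μ x y}.Nonempty := by
  obtain ⟨x⟩ := hconn.nonempty
  exact ⟨tau G μ x x, x, x, by rw [SimpleGraph.dist_self]; exact Nat.zero_le n, rfl⟩

lemma kappaSet_bddBelow (μ : Measure (G.edgeSet → Bool)) (n : ℕ) :
    BddBelow {t : ℝ | ∃ x y : V, G.dist x y ≤ n ∧ t = tau G μ x y} := by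
  refine ⟨0, ?_⟩
  rintro t ⟨x, y, -, rfl⟩
  exact tau_nonneg x y

lemma kappa_le_tau (μ : Measure (G.edgeSet → Bool)) {n : ℕ} {x y : V} (h : G.dist x y ≤ n) :
    kappa G μ n ≤ tau G μ x y :=
  csInf_le (kappaSet_bddBelow μ n) ⟨x, y, h, rfl⟩

lemma kappa_nonneg (hconn : G.Connected) (μ : Measure (G.edgeSet → Bool)) (n : ℕ) : 0 ≤ kappa G μ n := by
  refine le_csInf (kappaSet_nonempty hconn μ n) ?_
  rintro t ⟨x, y, -, rfl⟩
  exact tau_nonneg x y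

lemma kappa_le_one (hconn : G.Connected) (μ : Measure (G.edgeSet → Bool)) [IsProbabilityMeasure μ] (n : ℕ) :
    kappa G μ n ≤ 1 := by
  obtain ⟨x⟩ := hconn.nonempty
  exact le_trans (kappa_le_tau μ (by rw [SimpleGraph.dist_self]; exact Nat.zero_le n : G.dist x x ≤ n)) (tau_le_one x x)

lemma kappa_ge (hconn : G.Connected) (μ : Measure (G.edgeSet → Bool)) {n : ℕ} {c : ℝ}
    (h : ∀ x y : V, G.dist x y ≤ n → c ≤ tau G μ x y) : c ≤ kappa G μ n := by
  refine le_csInf (kappaSet_nonempty hconn μ n) ?_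
  rintro t ⟨x, y, hd, rfl⟩
  exact h x y hd

lemma kappa_mono_param (hconn : G.Connected) (hlf : ∀ v : V, (G.neighborSet v).Finite) {q p : ℝ} {μq μp : Measure (G.edgeSet → Bool)}
    (hbq : IsBernoulli G q μq) (hbp : IsBernoulli G p μp)
    (hq0 : 0 ≤ q) (hqp : q ≤ p) (hp1 : p ≤ 1) (n : ℕ) :
    kappa G μq n ≤ kappa G μp n := by
  refine le_csInf (kappaSet_nonempty hconn μp n) ?_
  rintro t ⟨x, y, hd, rfl⟩
  exact le_trans (kappa_le_tau μq hd) (tau_mono_param hconn hlf hbq hbp hq0 hqp hp1 x y)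

lemma supKappaRootSet_nonempty (μ : Measure (G.edgeSet → Bool)) :
    {t : ℝ | ∃ n : ℕ, 1 ≤ n ∧ t = kappa G μ n ^ ((n : ℝ)⁻¹)}.Nonempty :=
  ⟨kappa G μ 1 ^ ((1 : ℝ)⁻¹), 1, le_rfl, by norm_num⟩

lemma supKappaRootSet_bddAbove (hconn : G.Connected) (μ : Measure (G.edgeSet → Bool)) [IsProbabilityMeasure μ] :
    BddAbove {t : ℝ | ∃ n : ℕ, 1 ≤ n ∧ t = kappa G μ n ^ ((n : ℝ)⁻¹)} := by
  refine ⟨1, ?_⟩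
  rintro t ⟨n, hn, rfl⟩
  exact Real.rpow_le_one (kappa_nonneg hconn μ n) (kappa_le_one hconn μ n)
    (inv_nonneg.2 (Nat.cast_nonneg n))

lemma le_supKappaRoot (hconn : G.Connected) (μ : Measure (G.edgeSet → Bool)) [IsProbabilityMeasure μ]
    {n : ℕ} (hn : 1 ≤ n) : kappa G μ n ^ ((n : ℝ)⁻¹) ≤ supKappaRoot G μ :=
  le_csSup (supKappaRootSet_bddAbove hconn μ) ⟨n, hn, rfl⟩

lemma supKappaRoot_nonneg (hconn : G.Connected) (μ : Measure (G.edgeSet → Bool)) [IsProbabilityMeasure μ] :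
    0 ≤ supKappaRoot G μ :=
  le_trans (Real.rpow_nonneg (kappa_nonneg hconn μ 1) _) (le_supKappaRoot hconn μ le_rfl)

lemma supKappaRoot_mono (hconn : G.Connected) (hlf : ∀ v : V, (G.neighborSet v).Finite) {q p : ℝ} {μq μp : Measure (G.edgeSet → Bool)}
    (hbq : IsBernoulli G q μq) (hbp : IsBernoulli G p μp)
    (hq0 : 0 ≤ q) (hqp : q ≤ p) (hp1 : p ≤ 1) :
    supKappaRoot G μq ≤ supKappaRoot G μp := by
  haveI := isProb hbq; haveI := isProb hbp
  refine Real.sSup_le ?_ (supKappaRoot_nonneg hconn μp)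
  rintro t ⟨n, hn, rfl⟩
  refine le_trans (Real.rpow_le_rpow (kappa_nonneg hconn μq n)
    (kappa_mono_param hconn hlf hbq hbp hq0 hqp hp1 n) (inv_nonneg.2 (Nat.cast_nonneg n))) ?_
  exact le_supKappaRoot hconn μp hn

end Kappa

set_option maxHeartbeats 4000000 in
/-- On a connected, locally finite, quasi-transitive graph, the function
`p ↦ sup_{n ≥ 1} κ_p(n)^{1/n}` is left continuous on `(0,1]`. -/
theorem supKappaRoot_left_continuous
    {V : Type*} (G : SimpleGraph V)
    (hconn : G.Connected) (hlf : ∀ v : V, (G.neighborSet v).Finite)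
    (hqt : QuasiTransitive G)
    (μ : ℝ → Measure (G.edgeSet → Bool))
    (hμ : ∀ q ∈ Set.Icc (0:ℝ) 1, IsBernoulli G q (μ q)) :
    ∀ p ∈ Set.Ioc (0:ℝ) 1,
      Filter.Tendsto (fun ε : ℝ => supKappaRoot G (μ (p - ε))) (𝓝[>] (0:ℝ))
        (𝓝 (supKappaRoot G (μ p))) := by
  intro p hp
  obtain ⟨Sqt, hSqt⟩ := hqt
  have hp0 : 0 < p := hp.1
  have hp1 : p ≤ 1 := hp.2
  have hbp : IsBernoulli G p (μ p) := hμ p ⟨hp0.le, hp1⟩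
  haveI hprobp := isProb hbp
  have hIoo : Set.Ioo (0:ℝ) p ∈ 𝓝[>] (0:ℝ) :=
    Ioo_mem_nhdsGT_of_mem (Set.mem_Ico.2 ⟨le_rfl, hp0⟩)
  rw [tendsto_order]
  constructor
  · -- lower bound
    intro c hc
    rcases lt_or_ge c 0 with hc0 | hc0
    · filter_upwards [hIoo] with ε hε
      have hbq : IsBernoulli G (p - ε) (μ (p - ε)) :=
        hμ (p - ε) ⟨by linarith [hε.1, hε.2], by linarith [hε.1]⟩
      haveI := isProb hbq
      exact lt_of_lt_of_le hc0 (supKappaRoot_nonneg hconn (μ (p - ε)))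
    · obtain ⟨t, htmem, hct⟩ :=
        exists_lt_of_lt_csSup (supKappaRootSet_nonempty (μ := μ p) (G := G)) hc
      obtain ⟨n, hn1, rfl⟩ := htmem
      have hnne : n ≠ 0 := by omega
      obtain ⟨c'', hc1, hc2⟩ := exists_between hct
      have hc''0 : 0 ≤ c'' := le_trans hc0 hc1.le
      have hκ : c'' ^ n < kappa G (μ p) n := by
        have h1 := pow_lt_pow_left₀ hc2 hc''0 hnne
        rwa [Real.rpow_inv_natCast_pow (kappa_nonneg hconn (μ p) n) hnne] at h1
      classical
      set Pfin : Finset (V × V) :=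
        Sqt.biUnion (fun s => ((ball_finite hconn hlf s n).toFinset).image (fun z => (s, z)))
        with hPfin
      have hpair : ∀ pr ∈ Pfin, G.dist pr.1 pr.2 ≤ n := by
        intro pr hpr
        rw [hPfin, Finset.mem_biUnion] at hpr
        obtain ⟨s, -, hs2⟩ := hpr
        obtain ⟨z, hz, rfl⟩ := Finset.mem_image.1 hs2
        exact (ball_finite hconn hlf s n).mem_toFinset.1 hz
      have hex : ∀ pr : V × V, pr ∈ Pfin → ∃ r, c'' ^ n < tauLe G (μ p) pr.1 pr.2 r := by
        intro pr hpr
        exact exists_tauLe_gt (lt_of_lt_of_le hκ (kappa_le_tau (μ p) (hpair pr hpr)))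
      obtain ⟨R, hRb⟩ : ∃ R : ℕ, ∀ pr ∈ Pfin, c'' ^ n < tauLe G (μ p) pr.1 pr.2 R := by
        refine ⟨Pfin.sup (fun pr =>
          if h : ∃ r, c'' ^ n < tauLe G (μ p) pr.1 pr.2 r then h.choose else 0), ?_⟩
        intro pr hpr
        have h := hex pr hpr
        refine lt_of_lt_of_le h.choose_spec (tauLe_mono_r pr.1 pr.2 ?_)
        refine le_trans (le_of_eq ?_) (Finset.le_sup hpr)
        rw [dif_pos h]
      obtain ⟨M, hMb⟩ : ∃ M : ℕ, ∀ pr ∈ Pfin, (edgeBallFinset hconn hlf pr.1 R).card ≤ M :=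
        ⟨Pfin.sup (fun pr => (edgeBallFinset hconn hlf pr.1 R).card),
          fun pr hpr => Finset.le_sup
            (f := fun pr : V × V => (edgeBallFinset hconn hlf pr.1 R).card) hpr⟩
      have hcn : c ^ n < c'' ^ n := pow_lt_pow_left₀ hc1 hc0 hnne
      have hcont : Filter.Tendsto (fun ε : ℝ => ((p - ε) / p) ^ M * c'' ^ n) (𝓝 0)
          (𝓝 (c'' ^ n)) := by
        have hcont2 : Continuous fun ε : ℝ => ((p - ε) / p) ^ M * c'' ^ n :=
          ((((continuous_const.sub continuous_id).div_const p).pow M).mul continuous_const)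
        have h0 := hcont2.tendsto 0
        have hval : ((p - 0) / p) ^ M * c'' ^ n = c'' ^ n := by
          rw [sub_zero, div_self hp0.ne']; ring
        rwa [hval] at h0
      have hev : ∀ᶠ ε in 𝓝[>] (0:ℝ), c ^ n < ((p - ε) / p) ^ M * c'' ^ n :=
        eventually_nhdsWithin_of_eventually_nhds (hcont.eventually (eventually_gt_nhds hcn))
      filter_upwards [hev, hIoo] with ε hev1 hε
      have hq0 : 0 < p - ε := by linarith [hε.2]
      have hqp : p - ε ≤ p := by linarith [hε.1]
      have hq1 : p - ε ≤ 1 := by linarith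
      have hbq : IsBernoulli G (p - ε) (μ (p - ε)) := hμ (p - ε) ⟨hq0.le, hq1⟩
      haveI := isProb hbq
      have hκq : ((p - ε) / p) ^ M * c'' ^ n ≤ kappa G (μ (p - ε)) n := by
        refine kappa_ge hconn (μ (p - ε)) (fun x y hxy => ?_)
        obtain ⟨s, hs, γ, hγ⟩ := hSqt x
        have hγz : γ (γ.symm y) = y := γ.apply_symm_apply y
        have hdist : G.dist s (γ.symm y) ≤ n := by
          have h1 : G.dist (γ s) (γ (γ.symm y)) = G.dist s (γ.symm y) := dist_iso γ s (γ.symm y)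
          rw [hγ, hγz] at h1
          rw [← h1]; exact hxy
        have hPmem : (s, γ.symm y) ∈ Pfin := by
          rw [hPfin, Finset.mem_biUnion]
          exact ⟨s, hs, Finset.mem_image.2
            ⟨γ.symm y, (ball_finite hconn hlf s n).mem_toFinset.2 hdist, rfl⟩⟩
        have hτinv : tau G (μ (p - ε)) x y = tau G (μ (p - ε)) s (γ.symm y) := by
          have h1 := tau_iso hconn hlf hbq hq0.le hq1 γ s (γ.symm y)
          rw [hγ, hγz] at h1
          exact h1
        rw [hτinv]
        have hr1 : ((p - ε) / p) ^ ((edgeBallFinset hconn hlf s R).card)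
            * tauLe G (μ p) s (γ.symm y) R ≤ tau G (μ (p - ε)) s (γ.symm y) :=
          tau_ratio hconn hlf hbq hbp hq0.le hqp hp0 hp1 s (γ.symm y) R
        have hcard : (edgeBallFinset hconn hlf s R).card ≤ M := hMb _ hPmem
        have hbase0 : 0 ≤ (p - ε) / p := div_nonneg hq0.le hp0.le
        have hbase1 : (p - ε) / p ≤ 1 := by
          rw [div_le_one hp0]; linarith
        have hr2 : ((p - ε) / p) ^ M ≤ ((p - ε) / p) ^ ((edgeBallFinset hconn hlf s R).card) :=
          pow_le_pow_of_le_one hbase0 hbase1 hcard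
        have hr3 : ((p - ε) / p) ^ M * c'' ^ n
            ≤ ((p - ε) / p) ^ ((edgeBallFinset hconn hlf s R).card)
              * tauLe G (μ p) s (γ.symm y) R := by
          refine mul_le_mul hr2 (hRb _ hPmem).le (by positivity) (by positivity)
        exact le_trans hr3 hr1
      have hF : (((p - ε) / p) ^ M * c'' ^ n) ^ ((n : ℝ)⁻¹)
          ≤ supKappaRoot G (μ (p - ε)) := by
        refine le_trans (Real.rpow_le_rpow (by positivity) hκq
          (inv_nonneg.2 (Nat.cast_nonneg n))) ?_
        exact le_supKappaRoot hconn (μ (p - ε)) hn1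
      have hclt : c < (((p - ε) / p) ^ M * c'' ^ n) ^ ((n : ℝ)⁻¹) := by
        have h4 := Real.rpow_lt_rpow (by positivity : (0:ℝ) ≤ c ^ n) hev1
          (inv_pos.2 (show (0:ℝ) < (n:ℝ) by exact_mod_cast Nat.pos_of_ne_zero hnne))
        rwa [Real.pow_rpow_inv_natCast hc0 hnne] at h4
      exact lt_of_lt_of_le hclt hF
  · -- upper bound
    intro c hc
    filter_upwards [hIoo] with ε hε
    have hq0 : 0 < p - ε := by linarith [hε.2]
    have hq1 : p - ε ≤ 1 := by linarith [hε.1]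
    have hbq : IsBernoulli G (p - ε) (μ (p - ε)) := hμ (p - ε) ⟨hq0.le, hq1⟩
    exact lt_of_le_of_lt
      (supKappaRoot_mono hconn hlf hbq hbp hq0.le (by linarith [hε.1]) hp1) hc


end BernoulliPercolation
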